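/- If exchangeable real-valued nonconformity scores R₁,…,R_m, R_{m+1} are given and ε̂ is the ⌈(m+1)(1-α)⌉-th smallest value among R₁,…,R_m, then P(R_{m+1} ≤ ε̂) ≥ 1 - α, provided ⌈(m+1)(1-α)⌉ ≤ m. -/

import Mathlib

open MeasureTheory

/-- The `k`-th smallest element of a list of reals (1-indexed). -/
noncomputable def kthSmallest (l : List ℝ) (k : ℕ) : ℝ :=
  (l.mergeSort (fun a b => a ≤ b)).getD (k - 1) 0

section Aux

/-- Count in `List.ofFn` equals card of a filter. -/
lemma countP_ofFn' {n : ℕ} (f : Fin n → ℝ) (p : ℝ → Prop) [DecidablePred p] :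
    (List.ofFn f).countP (fun a => decide (p a)) = (Finset.univ.filter (fun i => p (f i))).card := by
  rw [List.ofFn_eq_map, List.countP_map]
  rw [List.countP_eq_length_filter]
  simp [Finset.filter, Fin.univ_def, Multiset.filter_coe, Function.comp_def]

variable {l : List ℝ} {k : ℕ}

lemma sorted_mono {s : List ℝ} (hs : s.Pairwise (· ≤ ·)) {i j : ℕ}
    (hij : i ≤ j) (hj : j < s.length) : s[i]'(lt_of_le_of_lt hij hj) ≤ s[j] := by
  rcases eq_or_lt_of_le hij with rfl | h
  · exact le_refl _
  · exact (List.pairwise_iff_getElem.mp hs) i j _ hj h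

/-- At least `k` elements of `l` are `≤` the `k`-th smallest. -/
lemma countP_le_kth (hk1 : 1 ≤ k) (hkl : k ≤ l.length) :
    k ≤ l.countP (fun a => decide (a ≤ (l.mergeSort (fun a b => a ≤ b)).getD (k - 1) 0)) := by
  set s := l.mergeSort (fun a b => a ≤ b) with hs_def
  have hperm : s.Perm l := List.mergeSort_perm l _
  have hlen : s.length = l.length := hperm.length_eq
  have hsorted : s.Pairwise (· ≤ ·) := by
    have := List.pairwise_mergeSort (le := fun a b : ℝ => decide (a ≤ b)) (fun a b c h1 h2 => by simp only [decide_eq_true_eq] at *; exact le_trans h1 h2) (fun a b => by simpa using le_total a b) l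
    simpa using this
  have hidx : k - 1 < s.length := by omega
  have hw : s.getD (k - 1) 0 = s[k - 1] := List.getD_eq_getElem s 0 hidx
  rw [← hperm.countP_eq]
  have htake : (s.take k).countP (fun a => decide (a ≤ s.getD (k - 1) 0)) = k := by
    have hall : ∀ a ∈ s.take k, a ≤ s.getD (k - 1) 0 := by
      intro a ha
      obtain ⟨i, hi, rfl⟩ := List.mem_iff_getElem.mp ha
      rw [List.getElem_take]
      rw [hw]
      exact sorted_mono hsorted (by simp at hi; omega) hidx
    have := List.countP_eq_length (p := fun a => decide (a ≤ s.getD (k - 1) 0))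
      (l := s.take k) |>.mpr (by intro a ha; simpa using hall a ha)
    rw [this, List.length_take]
    omega
  calc k = (s.take k).countP (fun a => decide (a ≤ s.getD (k - 1) 0)) := htake.symm
    _ ≤ s.countP (fun a => decide (a ≤ s.getD (k - 1) 0)) :=
        (List.take_sublist k s).countP_le

/-- Fewer than `k` elements of `l` are `<` the `k`-th smallest. -/
lemma countP_lt_kth (hk1 : 1 ≤ k) (hkl : k ≤ l.length) :
    l.countP (fun a => decide (a < (l.mergeSort (fun a b => a ≤ b)).getD (k - 1) 0)) < k := by
  set s := l.mergeSort (fun a b => a ≤ b) with hs_def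
  have hperm : s.Perm l := List.mergeSort_perm l _
  have hlen : s.length = l.length := hperm.length_eq
  have hsorted : s.Pairwise (· ≤ ·) := by
    have := List.pairwise_mergeSort (le := fun a b : ℝ => decide (a ≤ b)) (fun a b c h1 h2 => by simp only [decide_eq_true_eq] at *; exact le_trans h1 h2) (fun a b => by simpa using le_total a b) l
    simpa using this
  have hidx : k - 1 < s.length := by omega
  have hw : s.getD (k - 1) 0 = s[k - 1] := List.getD_eq_getElem s 0 hidx
  rw [← hperm.countP_eq]
  have hdrop : (s.drop (k-1)).countP (fun a => decide (a < s.getD (k - 1) 0)) = 0 := by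
    rw [List.countP_eq_zero]
    intro a ha
    obtain ⟨i, hi, rfl⟩ := List.mem_iff_getElem.mp ha
    rw [List.getElem_drop]
    simp only [decide_eq_true_eq, not_lt]
    rw [hw]
    exact sorted_mono hsorted (Nat.le_add_right _ _) (by simp at hi; omega)
  have hsplit : (s.take (k-1)).countP (fun a => decide (a < s.getD (k - 1) 0))
      + (s.drop (k-1)).countP (fun a => decide (a < s.getD (k - 1) 0))
      = s.countP (fun a => decide (a < s.getD (k - 1) 0)) := by
    rw [← List.countP_append, List.take_append_drop]
  have htake := List.countP_le_length
    (p := fun a => decide (a < s.getD (k - 1) 0)) (l := s.take (k-1))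
  rw [List.length_take] at htake
  omega

/-- reindexing a filter-card by a permutation -/
lemma card_filter_perm {n : ℕ} (π : Equiv.Perm (Fin n)) (p : Fin n → Prop) [DecidablePred p] :
    (Finset.univ.filter fun i => p (π i)).card = (Finset.univ.filter p).card := by
  apply Finset.card_bij (fun i _ => π i)
  · intro a ha; simp at ha ⊢; exact ha
  · intro a _ b _ h; exact π.injective h
  · intro b hb; refine ⟨π.symm b, by simpa using hb, by simp⟩

/-- Key combinatorial fact: at least `k` of the indices `j` have fewer than `k`
indices `i` with `x i < x j`. -/
lemma key_count {n : ℕ} (x : Fin n → ℝ) {k : ℕ} (hk1 : 1 ≤ k) (hkn : k ≤ n) :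
    k ≤ (Finset.univ.filter fun j =>
      (Finset.univ.filter fun i => x i < x j).card < k).card := by
  set L := List.ofFn x with hL
  have hlen : L.length = n := by simp [hL]
  set w := (L.mergeSort (fun a b => a ≤ b)).getD (k - 1) 0 with hw
  have hle : k ≤ (Finset.univ.filter fun j => x j ≤ w).card := by
    have := countP_le_kth (l := L) (k := k) hk1 (by omega)
    rwa [countP_ofFn' x (fun a => a ≤ w)] at this
  refine le_trans hle (Finset.card_le_card ?_)
  intro j hj
  simp only [Finset.mem_filter, Finset.mem_univ, true_and] at hj ⊢
  have hlt := countP_lt_kth (l := L) (k := k) hk1 (by omega)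
  rw [countP_ofFn' x (fun a => a < w)] at hlt
  calc (Finset.univ.filter fun i => x i < x j).card
      ≤ (Finset.univ.filter fun i => x i < w).card := by
        apply Finset.card_le_card
        intro i hi
        simp only [Finset.mem_filter, Finset.mem_univ, true_and] at hi ⊢
        exact lt_of_lt_of_le hi hj
    _ < k := hlt

end Aux

/-- Finite-sample quantile lemma underlying split conformal prediction:
if the nonconformity scores `R 0, …, R (m-1), R m` are exchangeable and `ε̂`
is the `⌈(m+1)(1-α)⌉`-th smallest value among the first `m` (calibration)
scores, then `P(R_{m+1} ≤ ε̂) ≥ 1 - α`, provided `⌈(m+1)(1-α)⌉ ≤ m`. -/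
theorem conformal_quantile_lemma
    {Ω : Type*} [MeasurableSpace Ω] (P : Measure Ω) [IsProbabilityMeasure P]
    (m : ℕ) (α : ℝ) (hα : α ∈ Set.Ioo (0:ℝ) 1)
    (R : Fin (m + 1) → Ω → ℝ) (hmeas : ∀ i, Measurable (R i))
    (hexch : ∀ π : Equiv.Perm (Fin (m + 1)),
      Measure.map (fun ω => fun i => R (π i) ω) P
        = Measure.map (fun ω => fun i => R i ω) P)
    (hk : ⌈((m : ℝ) + 1) * (1 - α)⌉₊ ≤ m) :
    ENNReal.ofReal (1 - α) ≤
      P {ω | R (Fin.last m) ω ≤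
        kthSmallest (List.ofFn fun i : Fin m => R i.castSucc ω)
          ⌈((m : ℝ) + 1) * (1 - α)⌉₊} := by
  set k := ⌈((m : ℝ) + 1) * (1 - α)⌉₊ with hkdef
  obtain ⟨hα0, hα1⟩ := hα
  have hk1 : 1 ≤ k := by
    rw [hkdef]
    rw [Nat.one_le_iff_ne_zero, ← Nat.pos_iff_ne_zero, Nat.ceil_pos]
    have h1α : (0:ℝ) < 1 - α := by linarith
    have h2 : (0:ℝ) < (m:ℝ) + 1 := by positivity
    exact mul_pos h2 h1α
  -- the joint map
  set f : Ω → (Fin (m+1) → ℝ) := fun ω i => R i ω with hf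
  have hfmeas : Measurable f := measurable_pi_lambda _ fun i => hmeas i
  set μ := Measure.map f P with hμ
  have hμprob : IsProbabilityMeasure μ := Measure.isProbabilityMeasure_map hfmeas.aemeasurable
  -- counting function
  set g : Fin (m+1) → (Fin (m+1) → ℝ) → ℕ :=
    fun j x => (Finset.univ.filter fun i => x i < x j).card with hg
  have hgmeas : ∀ j, Measurable (g j) := by
    intro j
    have : g j = fun x => ∑ i : Fin (m+1), if x i < x j then 1 else 0 := by
      funext x; rw [hg]; exact Finset.card_filter _ _
    rw [this]
    exact Finset.measurable_sum _ fun i _ =>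
      Measurable.ite (measurableSet_lt (measurable_pi_apply i) (measurable_pi_apply j))
        measurable_const measurable_const
  set B : Fin (m+1) → Set (Fin (m+1) → ℝ) := fun j => {x | g j x < k} with hB
  have hBmeas : ∀ j, MeasurableSet (B j) := fun j =>
    (hgmeas j) (measurableSet_lt measurable_id measurable_const)
  -- all B j have equal measure
  have hBeq : ∀ j, μ (B j) = μ (B (Fin.last m)) := by
    intro j
    set π := Equiv.swap j (Fin.last m) with hπ
    have hTmeas : Measurable (fun x : Fin (m+1) → ℝ => fun i => x (π i)) :=
      measurable_pi_lambda _ fun i => measurable_pi_apply (π i)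
    have hmap : Measure.map (fun x : Fin (m+1) → ℝ => fun i => x (π i)) μ = μ := by
      show Measure.map (fun x : Fin (m+1) → ℝ => fun i => x (π i)) (Measure.map f P)
        = Measure.map f P
      rw [Measure.map_map hTmeas hfmeas]
      have hcomp : ((fun x : Fin (m+1) → ℝ => fun i => x (π i)) ∘ f)
          = fun ω => fun i => R (π i) ω := rfl
      rw [hcomp]
      exact hexch π
    have hpre : (fun x : Fin (m+1) → ℝ => fun i => x (π i)) ⁻¹' (B (Fin.last m)) = B j := by
      ext x
      simp only [hB, Set.mem_preimage, Set.mem_setOf_eq, hg]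
      have hπlast : π (Fin.last m) = j := Equiv.swap_apply_right j (Fin.last m)
      simp only [hπlast]
      constructor <;> intro h
      · rwa [card_filter_perm π (fun i => x i < x j)] at h
      · rwa [card_filter_perm π (fun i => x i < x j)]
    calc μ (B j) = μ ((fun x : Fin (m+1) → ℝ => fun i => x (π i)) ⁻¹' (B (Fin.last m))) := by
          rw [hpre]
      _ = (Measure.map (fun x : Fin (m+1) → ℝ => fun i => x (π i)) μ) (B (Fin.last m)) := by
          rw [Measure.map_apply hTmeas (hBmeas (Fin.last m))]
      _ = μ (B (Fin.last m)) := by rw [hmap]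
  -- sum lower bound
  have hsum : (k : ENNReal) ≤ ∑ j : Fin (m+1), μ (B j) := by
    have hpt : ∀ x : Fin (m+1) → ℝ,
        (k : ENNReal) ≤ ∑ j : Fin (m+1), (B j).indicator (fun _ => (1:ENNReal)) x := by
      intro x
      have : ∑ j : Fin (m+1), (B j).indicator (fun _ => (1:ENNReal)) x
          = ((Finset.univ.filter fun j => g j x < k).card : ENNReal) := by
        rw [← Finset.sum_boole (fun j => g j x < k)]
        apply Finset.sum_congr rfl
        intro j _
        simp [Set.indicator_apply, hB]
      rw [this]
      exact_mod_cast Nat.cast_le.mpr (key_count x hk1 (by omega))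
    calc (k : ENNReal) = ∫⁻ _, (k : ENNReal) ∂μ := by simp
      _ ≤ ∫⁻ x, ∑ j : Fin (m+1), (B j).indicator (fun _ => (1:ENNReal)) x ∂μ :=
          lintegral_mono fun x => hpt x
      _ = ∑ j : Fin (m+1), ∫⁻ x, (B j).indicator (fun _ => (1:ENNReal)) x ∂μ :=
          lintegral_finset_sum _ fun j _ =>
            measurable_const.indicator (hBmeas j)
      _ = ∑ j : Fin (m+1), μ (B j) := by
          apply Finset.sum_congr rfl
          intro j _
          rw [lintegral_indicator (hBmeas j)]
          simp
  -- conclude μ (B last) ≥ k/(m+1)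
  have hsum' : (k : ENNReal) ≤ (m + 1 : ENNReal) * μ (B (Fin.last m)) := by
    calc (k : ENNReal) ≤ ∑ j : Fin (m+1), μ (B j) := hsum
      _ = ∑ _j : Fin (m+1), μ (B (Fin.last m)) := Finset.sum_congr rfl fun j _ => hBeq j
      _ = (m + 1 : ENNReal) * μ (B (Fin.last m)) := by
          rw [Finset.sum_const, Finset.card_univ, Fintype.card_fin]
          simp [nsmul_eq_mul]
  have hfinal : ENNReal.ofReal (1 - α) ≤ μ (B (Fin.last m)) := by
    have h1 : ENNReal.ofReal (1 - α) * (m + 1 : ENNReal) ≤ (k : ENNReal) := by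
      have : ((m : ℝ) + 1) * (1 - α) ≤ (k : ℝ) := by
        rw [hkdef]; exact Nat.le_ceil _
      calc ENNReal.ofReal (1 - α) * (m + 1 : ENNReal)
          = ENNReal.ofReal ((1 - α) * ((m : ℝ) + 1)) := by
            rw [ENNReal.ofReal_mul (by linarith)]
            congr 1
            rw [ENNReal.ofReal_add (by positivity) zero_le_one]
            simp [ENNReal.ofReal_natCast]
        _ ≤ ENNReal.ofReal (k : ℝ) := ENNReal.ofReal_le_ofReal (by linarith [this])
        _ = (k : ENNReal) := ENNReal.ofReal_natCast k
    have hne0 : (m + 1 : ENNReal) ≠ 0 := by simp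
    have hnetop : (m + 1 : ENNReal) ≠ ⊤ := by simp [ENNReal.add_eq_top]
    have := le_trans h1 hsum'
    rw [mul_comm (ENNReal.ofReal (1 - α)) _] at this
    exact (ENNReal.mul_le_mul_iff_right hne0 hnetop).mp this
  -- B (last m) pulls back into the target event
  refine le_trans hfinal ?_
  rw [hμ, Measure.map_apply hfmeas (hBmeas (Fin.last m))]
  apply measure_mono
  intro ω hω
  simp only [Set.mem_preimage, hB, Set.mem_setOf_eq, hg, hf] at hω ⊢
  -- hω : card {i : Fin (m+1) | R i ω < R last ω} < k
  have hcnt : (Finset.univ.filter fun i : Fin m => R i.castSucc ω < R (Fin.last m) ω).card < k := by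
    refine lt_of_le_of_lt ?_ hω
    apply Finset.card_le_card_of_injOn (fun i => i.castSucc)
    · intro a ha
      simp only [Finset.coe_filter, Finset.mem_filter, Finset.mem_univ, true_and, Set.mem_setOf_eq] at ha ⊢
      exact ha
    · intro a _ b _ h
      exact Fin.castSucc_injective m h
  -- now apply the list lemma
  set L := List.ofFn fun i : Fin m => R i.castSucc ω with hLdef
  have hLlen : L.length = m := by simp [hLdef]
  have hcount : L.countP (fun a => decide (a < R (Fin.last m) ω)) < k := by
    rwa [countP_ofFn' (fun i : Fin m => R i.castSucc ω) (fun a => a < R (Fin.last m) ω)]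
  by_contra hcon
  push_neg at hcon
  -- hcon : kthSmallest L k < R last ω
  unfold kthSmallest at hcon
  have := countP_le_kth (l := L) (k := k) hk1 (by omega)
  have hmono : L.countP (fun a => decide (a ≤ (L.mergeSort (fun a b => a ≤ b)).getD (k - 1) 0))
      ≤ L.countP (fun a => decide (a < R (Fin.last m) ω)) := by
    apply List.countP_mono_left
    intro a _ h
    simp only [decide_eq_true_eq] at h ⊢
    exact lt_of_le_of_lt h hcon
  omega
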